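/- If k > 1 and l > 0 are integers and t ≥ 0, then there exists a positive integer x such that the base-k representation of x·l has leading structure x·l = Σ_{q=1}^{Q} s_q k^{w(q)} with s_1 = 1, w(2) − w(1) > t, the exponents w(q) strictly increasing, and all digits s_q in {1, …, k−1}. (In other words, some multiple of l has a base-k expansion whose lowest nonzero digit is 1 and which is followed by a gap of more than t zero digits.) -/

import Mathlib

open Finset

lemma exists_period_aux {k l : ℕ} (hl : 1 ≤ l) :
    ∃ u e₀ : ℕ, 0 < e₀ ∧ k ^ (u + e₀) ≡ k ^ u [MOD l] := by
  obtain ⟨a, ha, b, hb, hab, heq⟩ :=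
    Finset.exists_ne_map_eq_of_card_lt_of_maps_to (s := Finset.range (l + 1))
      (t := Finset.range l) (by simp) (f := fun n => k ^ n % l)
      (fun n _ => Finset.mem_range.mpr (Nat.mod_lt _ hl))
  rcases lt_or_gt_of_ne hab with h | h
  · exact ⟨a, b - a, by omega, by
      have : a + (b - a) = b := by omega
      rw [this]; exact heq.symm⟩
  · exact ⟨b, a - b, by omega, by
      have : b + (a - b) = a := by omega
      rw [this]; exact heq⟩

theorem exists_multiple_low_digit_one_with_gap {k l : ℕ} (hk : 2 ≤ k) (hl : 1 ≤ l)
    (t : ℕ) :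
    ∃ x : ℕ, 0 < x ∧ ∃ w : ℕ,
      x * l / k ^ w % k = 1 ∧
      (∀ i : ℕ, i < w → x * l / k ^ i % k = 0) ∧
      (∀ i : ℕ, w < i → i ≤ w + t → x * l / k ^ i % k = 0) := by
  obtain ⟨u, e₀, he₀, hper⟩ := exists_period_aux (k := k) hl
  set e := e₀ * (t + 1) with hedef
  have he : t + 1 ≤ e := Nat.le_mul_of_pos_left _ he₀
  have hk0 : 0 < k := by omega
  -- periodicity for multiples
  have hpern : ∀ n : ℕ, k ^ (u + e₀ * n) ≡ k ^ u [MOD l] := by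
    intro n
    induction n with
    | zero => simpa using Nat.ModEq.refl (k ^ u)
    | succ n ih =>
      have : u + e₀ * (n + 1) = (u + e₀) + e₀ * n := by ring
      rw [this]
      calc k ^ ((u + e₀) + e₀ * n) = k ^ (u + e₀) * k ^ (e₀ * n) := by rw [pow_add]
        _ ≡ k ^ u * k ^ (e₀ * n) [MOD l] := hper.mul_right _
        _ = k ^ (u + e₀ * n) := by rw [← pow_add]
        _ ≡ k ^ u [MOD l] := ih
  have hperi : ∀ i : ℕ, k ^ (u + e * i) ≡ k ^ u [MOD l] := by
    intro i
    have : e * i = e₀ * ((t + 1) * i) := by rw [hedef]; ring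
    rw [this]; exact hpern _
  set m := ∑ i ∈ Finset.range (l - 1), k ^ (e * (i + 1) - (t + 1)) with hmdef
  set S := 1 + k ^ (t + 1) * m with hSdef
  have hS : S = ∑ i ∈ Finset.range l, k ^ (e * i) := by
    obtain ⟨l', rfl⟩ : ∃ l', l = l' + 1 := ⟨l - 1, by omega⟩
    rw [Finset.sum_range_succ']
    simp only [hSdef, hmdef, Nat.add_succ_sub_one, mul_zero, pow_zero]
    rw [Finset.mul_sum, add_comm]
    congr 1
    refine Finset.sum_congr rfl fun i _ => ?_
    rw [← pow_add]
    congr 1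
    have : t + 1 ≤ e * (i + 1) := le_trans he (Nat.le_mul_of_pos_right _ (by omega))
    omega
  have hdvd : l ∣ k ^ u * S := by
    haveI : NeZero l := ⟨by omega⟩
    rw [← ZMod.natCast_eq_zero_iff]
    push_cast [hS, Finset.mul_sum]
    calc (∑ i ∈ Finset.range l, (k:ZMod l) ^ u * (k:ZMod l) ^ (e * i))
        = ∑ i ∈ Finset.range l, ((k:ZMod l)) ^ (u + e * i) := by
          refine Finset.sum_congr rfl fun i _ => by rw [pow_add]
      _ = ∑ i ∈ Finset.range l, ((k:ZMod l)) ^ u := by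
          refine Finset.sum_congr rfl fun i _ => ?_
          have h1 : ((k ^ (u + e * i) : ℕ) : ZMod l) = ((k ^ u : ℕ) : ZMod l) :=
            (ZMod.natCast_eq_natCast_iff _ _ _).mpr (hperi i)
          push_cast at h1
          exact h1
      _ = (l : ZMod l) * (k : ZMod l) ^ u := by
          rw [Finset.sum_const, Finset.card_range, nsmul_eq_mul]
      _ = 0 := by rw [ZMod.natCast_self, zero_mul]
  have hSpos : 0 < S := by rw [hSdef]; omega
  have hMpos : 0 < k ^ u * S := Nat.mul_pos (Nat.pow_pos hk0) hSpos
  refine ⟨k ^ u * S / l, Nat.div_pos (Nat.le_of_dvd hMpos hdvd) hl, u, ?_⟩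
  have hxl : k ^ u * S / l * l = k ^ u * S := Nat.div_mul_cancel hdvd
  rw [hxl]
  refine ⟨?_, ?_, ?_⟩
  · rw [Nat.mul_div_cancel_left _ (Nat.pow_pos hk0), hSdef]
    have : k ^ (t + 1) * m = k * (k ^ t * m) := by ring
    rw [this, Nat.add_mul_mod_self_left, Nat.one_mod_eq_one.mpr (by omega)]
  · intro i hi
    have : k ^ u = k ^ i * k ^ (u - i) := by rw [← pow_add]; congr 1; omega
    rw [this, mul_assoc, Nat.mul_div_cancel_left _ (Nat.pow_pos hk0)]
    have : k ^ (u - i) = k * k ^ (u - i - 1) := by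
      rw [← pow_succ']; congr 1; omega
    rw [this, mul_assoc, Nat.mul_mod_right]
  · intro i hi1 hi2
    set j := i - u with hj
    have hj1 : 1 ≤ j := by omega
    have hjt : j ≤ t := by omega
    have : k ^ i = k ^ u * k ^ j := by rw [← pow_add]; congr 1; omega
    rw [this, Nat.mul_div_mul_left _ _ (Nat.pow_pos hk0), hSdef]
    have hsplit : k ^ (t + 1) * m = k ^ j * (k ^ (t + 1 - j) * m) := by
      rw [← mul_assoc, ← pow_add]; congr 2; omega
    rw [hsplit, Nat.add_mul_div_left _ _ (Nat.pow_pos hk0),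
      Nat.div_eq_of_lt (by calc 1 < k := by omega
        _ ≤ k ^ j := Nat.le_self_pow (by omega) _), zero_add]
    have : k ^ (t + 1 - j) * m = k * (k ^ (t - j) * m) := by
      rw [← mul_assoc, ← pow_succ']; congr 2; omega
    rw [this, Nat.mul_mod_right]
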